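/- (Proposition 4.3) Suppose that for every mode d = 1,…,D, the mode-d similarity graph (vertex set {1,…,n_d}, edge {i,j} iff w_{d,ij} > 0) is connected. Then there exists γ_max ≥ 0 such that for every γ ≥ γ_max, the unique minimizer of the CoCo objective F_γ is the grand-mean vector x̄·1, where x̄ = (1/n)⟨x, 1⟩ and 1 ∈ ℝ^n is the all-ones vector. -/

import Mathlib

open scoped BigOperators
open Finset MeasureTheory

noncomputable section

/-- The full (vectorized) index set of a `D`-way tensor with mode sizes `n d`. -/
abbrev TIdx {D : ℕ} (n : Fin D → ℕ) : Type := ∀ d, Fin (n d)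

/-- The index set of a mode-`d` subarray: all modes except `d`. -/
abbrev RIdx {D : ℕ} (n : Fin D → ℕ) (d : Fin D) : Type :=
  ∀ d' : {x : Fin D // x ≠ d}, Fin (n d'.1)

/-- Insert the mode-`d` index `i` into the partial index `g`. -/
def insIdx {D : ℕ} (n : Fin D → ℕ) (d : Fin D) (g : RIdx n d) (i : Fin (n d)) : TIdx n :=
  fun d' => if h : d' = d then h.symm ▸ i else g ⟨d', h⟩

/-- The matrix `A_{d,ij} = I ⊗ ⋯ ⊗ (e_i - e_j)ᵀ ⊗ ⋯ ⊗ I`, realized on the canonical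
multi-index sets: applied to `u`, the `g`-th entry is `u(.., i, ..) - u(.., j, ..)`. -/
def Amat {D : ℕ} (n : Fin D → ℕ) (d : Fin D) (i j : Fin (n d)) :
    Matrix (RIdx n d) (TIdx n) ℝ :=
  Matrix.of fun g f =>
    (if f = insIdx n d g i then (1 : ℝ) else 0) - (if f = insIdx n d g j then (1 : ℝ) else 0)

/-- Euclidean (ℓ₂) norm of a finitely-indexed real vector. -/
def l2 {κ : Type*} [Fintype κ] (v : κ → ℝ) : ℝ := Real.sqrt (∑ a, v a ^ 2)

/-- The mode-`d` fusion penalty `R_d(u) = Σ_{i<j} w_{d,ij} ‖A_{d,ij} u‖₂`. -/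
def Rmode {D : ℕ} (n : Fin D → ℕ) (d : Fin D) (w : Fin (n d) → Fin (n d) → ℝ)
    (u : TIdx n → ℝ) : ℝ :=
  ∑ i, ∑ j, if i < j then w i j * l2 ((Amat n d i j).mulVec u) else 0

/-- The CoCo objective `F_γ(u) = (1/2)‖x - u‖₂² + γ Σ_d Σ_{i<j} w_{d,ij} ‖A_{d,ij} u‖₂`. -/
def coco {D : ℕ} (n : Fin D → ℕ) (x : TIdx n → ℝ) (γ : ℝ)
    (w : ∀ d, Fin (n d) → Fin (n d) → ℝ) (u : TIdx n → ℝ) : ℝ :=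
  (1 / 2) * ∑ f, (x f - u f) ^ 2 + γ * ∑ d, Rmode n d (w d) u

/-- The mode-`d` similarity graph is connected: any two mode-`d` indices are joined by a finite
path each of whose steps is a pair `{a,b}` with strictly positive weight. -/
def ModeConnected {D : ℕ} (n : Fin D → ℕ) (d : Fin D)
    (w : Fin (n d) → Fin (n d) → ℝ) : Prop :=
  ∀ i j : Fin (n d),
    Relation.ReflTransGen (fun a b => (a < b ∧ 0 < w a b) ∨ (b < a ∧ 0 < w b a)) i j

lemma l2_nonneg {κ : Type*} [Fintype κ] (v : κ → ℝ) : 0 ≤ l2 v := Real.sqrt_nonneg _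
lemma l2_eq_zero {κ : Type*} [Fintype κ] {v : κ → ℝ} (h : l2 v = 0) : ∀ a, v a = 0 := by
  intro a
  have hs : ∑ b, v b ^ 2 = 0 := by
    have h2 := Real.sqrt_eq_zero'.mp h
    have h3 : 0 ≤ ∑ b, v b ^ 2 := Finset.sum_nonneg fun b _ => sq_nonneg _
    linarith
  have := (Finset.sum_eq_zero_iff_of_nonneg (fun b _ => sq_nonneg (v b))).mp hs a (mem_univ a)
  exact pow_eq_zero_iff (by norm_num) |>.mp this
lemma mulVec_Amat {D : ℕ} (n : Fin D → ℕ) (d : Fin D) (i j : Fin (n d)) (u : TIdx n → ℝ)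
    (g : RIdx n d) :
    (Amat n d i j).mulVec u g = u (insIdx n d g i) - u (insIdx n d g j) := by
  simp [Matrix.mulVec, dotProduct, Amat, sub_mul, ite_mul, one_mul, zero_mul,
    Finset.sum_sub_distrib, Finset.sum_ite_eq']
lemma insIdx_update {D : ℕ} (n : Fin D → ℕ) (d : Fin D) (f : TIdx n) (i : Fin (n d)) :
    insIdx n d (fun d' => f d'.1) i = Function.update f d i := by
  funext d'
  rcases eq_or_ne d' d with h | h
  · subst h; simp [insIdx]
  · simp [insIdx, h, Function.update_of_ne h]
lemma insIdx_self {D : ℕ} (n : Fin D → ℕ) (d : Fin D) (f : TIdx n) :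
    insIdx n d (fun d' => f d'.1) (f d) = f := by
  rw [insIdx_update]; simp

-- the total penalty
def cocoPen {D : ℕ} (n : Fin D → ℕ) (w : ∀ d, Fin (n d) → Fin (n d) → ℝ)
    (u : TIdx n → ℝ) : ℝ := ∑ d, Rmode n d (w d) u

lemma Rmode_nonneg {D : ℕ} (n : Fin D → ℕ) (d : Fin D) {w : Fin (n d) → Fin (n d) → ℝ}
    (hw : ∀ i j, 0 ≤ w i j) (u : TIdx n → ℝ) : 0 ≤ Rmode n d w u := by
  apply Finset.sum_nonneg; intro i _
  apply Finset.sum_nonneg; intro j _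
  split
  · exact mul_nonneg (hw i j) (l2_nonneg _)
  · exact le_refl 0

lemma cocoPen_nonneg {D : ℕ} (n : Fin D → ℕ) {w : ∀ d, Fin (n d) → Fin (n d) → ℝ}
    (hw : ∀ d i j, 0 ≤ w d i j) (u : TIdx n → ℝ) : 0 ≤ cocoPen n w u :=
  Finset.sum_nonneg fun d _ => Rmode_nonneg n d (hw d) u

lemma cocoPen_shift {D : ℕ} (n : Fin D → ℕ) (w : ∀ d, Fin (n d) → Fin (n d) → ℝ)
    (c : ℝ) (v : TIdx n → ℝ) :
    cocoPen n w (fun f => c + v f) = cocoPen n w v := by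
  unfold cocoPen Rmode
  congr 1; funext d; congr 1; funext i; congr 1; funext j
  congr 2
  congr 1
  funext g
  rw [mulVec_Amat, mulVec_Amat]; ring

lemma cocoPen_smul {D : ℕ} (n : Fin D → ℕ) (w : ∀ d, Fin (n d) → Fin (n d) → ℝ)
    {t : ℝ} (ht : 0 ≤ t) (v : TIdx n → ℝ) :
    cocoPen n w (fun f => t * v f) = t * cocoPen n w v := by
  unfold cocoPen Rmode
  rw [Finset.mul_sum]
  congr 1; funext d
  rw [Finset.mul_sum]
  congr 1; funext i
  rw [Finset.mul_sum]
  congr 1; funext j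
  split
  · have : ((Amat n d i j).mulVec fun f => t * v f) = fun g => t * (Amat n d i j).mulVec v g := by
      funext g; rw [mulVec_Amat, mulVec_Amat]; ring
    rw [this]
    have : l2 (fun g => t * (Amat n d i j).mulVec v g) = t * l2 ((Amat n d i j).mulVec v) := by
      have h1 : l2 (fun g => t * (Amat n d i j).mulVec v g)
          = Real.sqrt (∑ a, (t * (Amat n d i j).mulVec v a) ^ 2) := rfl
      have h2 : (∑ a, (t * (Amat n d i j).mulVec v a) ^ 2)
          = t ^ 2 * ∑ a, ((Amat n d i j).mulVec v a) ^ 2 := by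
        rw [Finset.mul_sum]; congr 1; funext g; ring
      rw [h1, h2, Real.sqrt_mul (sq_nonneg t), Real.sqrt_sq ht]; rfl
    rw [this]; ring
  · ring

lemma cocoPen_const {D : ℕ} (n : Fin D → ℕ) (w : ∀ d, Fin (n d) → Fin (n d) → ℝ) (c : ℝ) :
    cocoPen n w (fun _ => c) = 0 := by
  apply Finset.sum_eq_zero; intro d _
  apply Finset.sum_eq_zero; intro i _
  apply Finset.sum_eq_zero; intro j _
  split
  · have : ((Amat n d i j).mulVec fun _ => c) = fun _ => (0:ℝ) := by
      funext g; rw [mulVec_Amat]; ring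
    rw [this]
    simp [l2]
  · rfl

lemma cocoPen_continuous {D : ℕ} (n : Fin D → ℕ) (w : ∀ d, Fin (n d) → Fin (n d) → ℝ) :
    Continuous (cocoPen n w) := by
  unfold cocoPen Rmode
  apply continuous_finset_sum; intro d _
  apply continuous_finset_sum; intro i _
  apply continuous_finset_sum; intro j _
  by_cases h : i < j
  · simp only [if_pos h]
    apply Continuous.mul continuous_const
    unfold l2
    apply Real.continuous_sqrt.comp
    apply continuous_finset_sum; intro g _
    apply Continuous.pow
    simp only [Matrix.mulVec, dotProduct]
    apply continuous_finset_sum; intro f _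
    exact continuous_const.mul (continuous_apply f)
  · simp only [if_neg h]; exact continuous_const

lemma cocoPen_zero_step {D : ℕ} (n : Fin D → ℕ) {w : ∀ d, Fin (n d) → Fin (n d) → ℝ}
    (hw : ∀ d i j, 0 ≤ w d i j) {v : TIdx n → ℝ} (h : cocoPen n w v = 0)
    (d : Fin D) {i j : Fin (n d)} (hij : i < j) (hpos : 0 < w d i j) (g : RIdx n d) :
    v (insIdx n d g i) = v (insIdx n d g j) := by
  have hd : Rmode n d (w d) v = 0 :=
    (Finset.sum_eq_zero_iff_of_nonneg (fun d' _ => Rmode_nonneg n d' (hw d') v)).mp h d (mem_univ d)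
  have hi : ∑ j', (if i < j' then w d i j' * l2 ((Amat n d i j').mulVec v) else 0) = 0 := by
    refine (Finset.sum_eq_zero_iff_of_nonneg ?_).mp hd i (mem_univ i)
    intro i' _
    apply Finset.sum_nonneg; intro j' _
    split
    · exact mul_nonneg (hw d i' j') (l2_nonneg _)
    · exact le_refl 0
  have hj : (if i < j then w d i j * l2 ((Amat n d i j).mulVec v) else 0) = 0 := by
    refine (Finset.sum_eq_zero_iff_of_nonneg ?_).mp hi j (mem_univ j)
    intro j' _
    split
    · exact mul_nonneg (hw d i j') (l2_nonneg _)
    · exact le_refl 0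
  rw [if_pos hij] at hj
  have hl2 : l2 ((Amat n d i j).mulVec v) = 0 := by
    rcases mul_eq_zero.mp hj with h' | h'
    · exact absurd h' (ne_of_gt hpos)
    · exact h'
  have := l2_eq_zero hl2 g
  rw [mulVec_Amat] at this
  linarith

lemma cocoPen_zero_mode {D : ℕ} (n : Fin D → ℕ) {w : ∀ d, Fin (n d) → Fin (n d) → ℝ}
    (hw : ∀ d i j, 0 ≤ w d i j) (hconn : ∀ d, ModeConnected n d (w d))
    {v : TIdx n → ℝ} (h : cocoPen n w v = 0)
    (d : Fin D) (g : RIdx n d) (i j : Fin (n d)) :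
    v (insIdx n d g i) = v (insIdx n d g j) := by
  have hrel := hconn d i j
  induction hrel with
  | refl => rfl
  | tail h₁ hbc ih =>
    rcases hbc with ⟨hlt, hpos⟩ | ⟨hlt, hpos⟩
    · exact ih.trans (cocoPen_zero_step n hw h d hlt hpos g)
    · exact ih.trans (cocoPen_zero_step n hw h d hlt hpos g).symm

lemma cocoPen_zero_const {D : ℕ} (n : Fin D → ℕ) {w : ∀ d, Fin (n d) → Fin (n d) → ℝ}
    (hw : ∀ d i j, 0 ≤ w d i j) (hconn : ∀ d, ModeConnected n d (w d))
    {v : TIdx n → ℝ} (h : cocoPen n w v = 0) (f f' : TIdx n) : v f = v f' := by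
  have key : ∀ s : Finset (Fin D), ∀ f f' : TIdx n, (∀ d, d ∉ s → f d = f' d) → v f = v f' := by
    intro s
    induction s using Finset.induction_on with
    | empty =>
      intro f f' hagree
      have : f = f' := funext fun d => hagree d (Finset.notMem_empty d)
      rw [this]
    | @insert a s ha ih =>
      intro f f' hagree
      have h1 : v f = v (Function.update f a (f' a)) := by
        conv_lhs => rw [← insIdx_self n a f]
        rw [← insIdx_update n a f (f' a)]
        exact cocoPen_zero_mode n hw hconn h a _ (f a) (f' a)
      rw [h1]
      apply ih
      intro d hd
      rcases eq_or_ne d a with rfl | hda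
      · simp
      · rw [Function.update_of_ne hda]
        exact hagree d (by simp [hd, hda])
  exact key Finset.univ f f' (fun d hd => absurd (Finset.mem_univ d) hd)

lemma pen_zero_mean_zero {D : ℕ} (n : Fin D → ℕ) {w : ∀ d, Fin (n d) → Fin (n d) → ℝ}
    (hw : ∀ d i j, 0 ≤ w d i j) (hconn : ∀ d, ModeConnected n d (w d))
    {v : TIdx n → ℝ} (h0 : cocoPen n w v = 0) (hmean : ∑ f, v f = 0) : v = 0 := by
  funext f
  have hconst := cocoPen_zero_const n hw hconn h0
  have hsum : ∑ f', v f' = (Fintype.card (TIdx n) : ℝ) * v f := by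
    rw [Finset.sum_congr rfl (fun f' _ => hconst f' f)]
    simp [Finset.sum_const, Finset.card_univ, nsmul_eq_mul]
  have hcard : 0 < (Fintype.card (TIdx n) : ℝ) := by
    have : Nonempty (TIdx n) := ⟨f⟩
    exact_mod_cast Fintype.card_pos
  rw [hmean] at hsum
  have := (mul_eq_zero.mp hsum.symm).resolve_left (ne_of_gt hcard)
  simpa using this

lemma norm_smul_inv {ι : Type*} [Fintype ι] {v : ι → ℝ} (hne : v ≠ 0) :
    ‖(‖v‖⁻¹ • v : ι → ℝ)‖ = 1 := by
  have ht : (0:ℝ) < ‖v‖ := norm_pos_iff.mpr hne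
  rw [norm_smul, Real.norm_eq_abs, abs_inv, abs_of_pos ht, inv_mul_cancel₀ (ne_of_gt ht)]

lemma exists_pen_lb {D : ℕ} (n : Fin D → ℕ) {w : ∀ d, Fin (n d) → Fin (n d) → ℝ}
    (hw : ∀ d i j, 0 ≤ w d i j) (hconn : ∀ d, ModeConnected n d (w d)) :
    ∃ c : ℝ, 0 < c ∧ ∀ v : TIdx n → ℝ, (∑ f, v f = 0) → c * ‖v‖ ≤ cocoPen n w v := by
  set S : Set (TIdx n → ℝ) := {v | (∑ f, v f = 0) ∧ ‖v‖ = 1} with hS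
  by_cases hne : S.Nonempty
  · have hclosed : IsClosed S := by
      have h1 : IsClosed {v : TIdx n → ℝ | ∑ f, v f = 0} :=
        isClosed_singleton.preimage (continuous_finset_sum univ fun f _ => continuous_apply f)
      have h2 : IsClosed {v : TIdx n → ℝ | ‖v‖ = 1} :=
        isClosed_singleton.preimage continuous_norm
      exact h1.inter h2
    have hsub : S ⊆ Metric.closedBall 0 1 := by
      intro v hv
      exact Metric.mem_closedBall.mpr (by rw [dist_zero_right, hv.2])
    have hcpt : IsCompact S :=
      (isCompact_closedBall (0 : TIdx n → ℝ) 1).of_isClosed_subset hclosed hsub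
    obtain ⟨v₀, hv₀S, hmin'⟩ := hcpt.exists_isMinOn hne (cocoPen_continuous n w).continuousOn
    have hmin : ∀ v ∈ S, cocoPen n w v₀ ≤ cocoPen n w v := fun v hv => hmin' hv
    refine ⟨cocoPen n w v₀, ?_, ?_⟩
    · rcases lt_or_eq_of_le (cocoPen_nonneg n hw v₀) with h | h
      · exact h
      · exfalso
        have hz : v₀ = 0 := pen_zero_mean_zero n hw hconn h.symm hv₀S.1
        have h1 : ‖v₀‖ = 1 := hv₀S.2
        rw [hz, norm_zero] at h1
        exact zero_ne_one h1
    · intro v hmean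
      rcases eq_or_ne v 0 with rfl | hvne
      · simpa using cocoPen_nonneg n hw 0
      · have ht : (0:ℝ) < ‖v‖ := norm_pos_iff.mpr hvne
        set v₁ : TIdx n → ℝ := ‖v‖⁻¹ • v with hv₁
        have hv₁S : v₁ ∈ S := by
          constructor
          · have : ∑ f, v₁ f = ‖v‖⁻¹ * ∑ f, v f := by
              rw [Finset.mul_sum]; rfl
            rw [this, hmean, mul_zero]
          · exact norm_smul_inv hvne
        have hle := hmin v₁ hv₁S
        have hv_eq : v = fun f => ‖v‖ * v₁ f := by
          funext f
          simp only [hv₁, Pi.smul_apply, smul_eq_mul]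
          field_simp
        have : cocoPen n w v = ‖v‖ * cocoPen n w v₁ := by
          conv_lhs => rw [hv_eq]
          exact cocoPen_smul n w (le_of_lt ht) v₁
        rw [this, mul_comm (cocoPen n w v₀) ‖v‖]
        exact mul_le_mul_of_nonneg_left hle (le_of_lt ht)
  · refine ⟨1, one_pos, ?_⟩
    intro v hmean
    rcases eq_or_ne v 0 with rfl | hvne
    · simpa using cocoPen_nonneg n hw 0
    · exfalso
      apply hne
      refine ⟨‖v‖⁻¹ • v, ?_, norm_smul_inv hvne⟩
      have : ∑ f, (‖v‖⁻¹ • v) f = ‖v‖⁻¹ * ∑ f, v f := by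
        rw [Finset.mul_sum]; rfl
      rw [this, hmean, mul_zero]

lemma sum_Rmode_const {D : ℕ} (n : Fin D → ℕ) (w : ∀ d, Fin (n d) → Fin (n d) → ℝ) (c : ℝ) :
    ∑ d, Rmode n d (w d) (fun _ => c) = 0 := cocoPen_const n w c

/-- **Proposition 4.3.** If every mode-`d` similarity graph is connected, then
there is a `γ_max ≥ 0` such that for all `γ ≥ γ_max` the unique minimizer of the CoCo objective
`F_γ` is the grand-mean vector `x̄·1`, where `x̄ = (1/n)⟨x, 1⟩`. -/
theorem coco_minimizer_eq_grand_mean_for_large_gamma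
    {D : ℕ} (n : Fin D → ℕ) (x : TIdx n → ℝ)
    (w : ∀ d, Fin (n d) → Fin (n d) → ℝ) (hw : ∀ d i j, 0 ≤ w d i j)
    (hconn : ∀ d, ModeConnected n d (w d)) :
    ∃ γmax : ℝ, 0 ≤ γmax ∧ ∀ γ : ℝ, γmax ≤ γ →
      (∀ u : TIdx n → ℝ,
        coco n x γ w (fun _ => (∑ f, x f) / (Fintype.card (TIdx n) : ℝ)) ≤ coco n x γ w u) ∧
      (∀ u : TIdx n → ℝ, u ≠ (fun _ => (∑ f, x f) / (Fintype.card (TIdx n) : ℝ)) →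
        coco n x γ w (fun _ => (∑ f, x f) / (Fintype.card (TIdx n) : ℝ)) < coco n x γ w u) := by
  classical
  obtain ⟨c, hc, hlb⟩ := exists_pen_lb n hw hconn
  set N : ℝ := (Fintype.card (TIdx n) : ℝ) with hN
  set xbar : ℝ := (∑ f, x f) / N with hxbar
  set ubar : TIdx n → ℝ := fun _ => xbar with hubar
  set C : ℝ := ∑ f, |x f - xbar| with hC
  have hC0 : 0 ≤ C := Finset.sum_nonneg fun f _ => abs_nonneg _
  refine ⟨C / c, div_nonneg hC0 hc.le, ?_⟩
  intro γ hγ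
  have hγ0 : 0 ≤ γ := le_trans (div_nonneg hC0 hc.le) hγ
  have hCγc : C ≤ γ * c := by
    rw [div_le_iff₀ hc] at hγ; linarith
  have hcoco_ubar : coco n x γ w ubar = (1/2) * ∑ f, (x f - xbar)^2 := by
    rw [hubar]
    simp only [coco]
    rw [sum_Rmode_const n w xbar, mul_zero, add_zero]
  rcases isEmpty_or_nonempty (TIdx n) with hemp | hne
  · have huniq : ∀ u : TIdx n → ℝ, u = ubar := fun u => funext fun f => isEmptyElim f
    constructor
    · intro u; rw [huniq u]
    · intro u hu; exact absurd (huniq u) hu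
  · have hNpos : 0 < N := by
      rw [hN]; exact_mod_cast Fintype.card_pos
    have key : ∀ u : TIdx n → ℝ,
        coco n x γ w ubar
          + (1/2) * ((∑ f, (u f - (∑ f', u f')/N)^2) + N * (xbar - (∑ f', u f')/N)^2)
          ≤ coco n x γ w u := by
      intro u
      set m : ℝ := (∑ f', u f')/N with hm
      have hmean_v : ∑ f, (u f - m) = 0 := by
        rw [Finset.sum_sub_distrib, Finset.sum_const, Finset.card_univ, nsmul_eq_mul, hm, ← hN]
        field_simp
        ring
      have hmean_a : ∑ f, (x f - xbar) = 0 := by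
        rw [Finset.sum_sub_distrib, Finset.sum_const, Finset.card_univ, nsmul_eq_mul, hxbar, ← hN]
        field_simp
        ring
      have hpen : ∑ d, Rmode n d (w d) u = cocoPen n w (fun f => u f - m) := by
        have hu : u = fun f => m + (u f - m) := funext fun f => by ring
        calc (∑ d, Rmode n d (w d) u) = cocoPen n w u := rfl
          _ = cocoPen n w (fun f => m + (u f - m)) := by conv_lhs => rw [hu]
          _ = cocoPen n w (fun f => u f - m) := cocoPen_shift n w m _
      have hexp : ∑ f, (x f - u f)^2
          = ∑ f, (x f - xbar)^2 + ∑ f, (u f - m)^2 + N * (xbar - m)^2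
            - 2 * ∑ f, (x f - xbar) * (u f - m) := by
        have hpt : ∀ f, (x f - u f)^2
            = (x f - xbar)^2 + (u f - m)^2 + (xbar - m)^2 - 2*((x f - xbar) * (u f - m))
              + (2*(xbar - m))*(x f - xbar) - (2*(xbar - m))*(u f - m) := by
          intro f; ring
        rw [Finset.sum_congr rfl (fun f _ => hpt f)]
        rw [Finset.sum_sub_distrib, Finset.sum_add_distrib, Finset.sum_sub_distrib,
          Finset.sum_add_distrib, Finset.sum_add_distrib, ← Finset.mul_sum, ← Finset.mul_sum,
          ← Finset.mul_sum, hmean_a, hmean_v, Finset.sum_const, Finset.card_univ, nsmul_eq_mul,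
          ← hN]
        ring
      have hip : ∑ f, (x f - xbar) * (u f - m) ≤ γ * cocoPen n w (fun f => u f - m) := by
        calc ∑ f, (x f - xbar) * (u f - m)
            ≤ ∑ f, |x f - xbar| * ‖(fun f => u f - m : TIdx n → ℝ)‖ := by
              apply Finset.sum_le_sum; intro f _
              calc (x f - xbar) * (u f - m) ≤ |(x f - xbar) * (u f - m)| := le_abs_self _
                _ = |x f - xbar| * |u f - m| := abs_mul _ _
                _ ≤ |x f - xbar| * ‖(fun f => u f - m : TIdx n → ℝ)‖ := by
                    apply mul_le_mul_of_nonneg_left _ (abs_nonneg _)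
                    simpa [Real.norm_eq_abs] using
                      norm_le_pi_norm (fun f => u f - m : TIdx n → ℝ) f
          _ = C * ‖(fun f => u f - m : TIdx n → ℝ)‖ := by rw [← Finset.sum_mul]
          _ ≤ (γ * c) * ‖(fun f => u f - m : TIdx n → ℝ)‖ :=
              mul_le_mul_of_nonneg_right hCγc (norm_nonneg _)
          _ = γ * (c * ‖(fun f => u f - m : TIdx n → ℝ)‖) := by ring
          _ ≤ γ * cocoPen n w (fun f => u f - m) :=
              mul_le_mul_of_nonneg_left (hlb _ hmean_v) hγ0
      simp only [coco]
      rw [hpen, hexp]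
      have hRub : ∑ d, Rmode n d (w d) ubar = 0 := by
        rw [hubar]; exact sum_Rmode_const n w xbar
      rw [hRub]
      have hub : ∀ f, ubar f = xbar := fun f => by rw [hubar]
      rw [Finset.sum_congr rfl (fun f _ => by rw [hub f])]
      linarith [hip]
    constructor
    · intro u
      refine le_trans ?_ (key u)
      have h1 : 0 ≤ ∑ f, (u f - (∑ f', u f')/N)^2 := Finset.sum_nonneg fun f _ => sq_nonneg _
      have h2 : 0 ≤ N * (xbar - (∑ f', u f')/N)^2 := mul_nonneg hNpos.le (sq_nonneg _)
      linarith
    · intro u hu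
      refine lt_of_lt_of_le ?_ (key u)
      have h1 : 0 ≤ ∑ f, (u f - (∑ f', u f')/N)^2 := Finset.sum_nonneg fun f _ => sq_nonneg _
      have h2 : 0 ≤ N * (xbar - (∑ f', u f')/N)^2 := mul_nonneg hNpos.le (sq_nonneg _)
      have hpos : 0 < ∑ f, (u f - (∑ f', u f')/N)^2 + N * (xbar - (∑ f', u f')/N)^2 := by
        by_cases hall : ∀ f, u f = (∑ f', u f')/N
        · have hm_ne : (∑ f', u f')/N ≠ xbar := by
            intro hmx
            apply hu
            funext f
            rw [hall f, hmx, hubar]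
          have : 0 < N * (xbar - (∑ f', u f')/N)^2 :=
            mul_pos hNpos (sq_pos_of_ne_zero (sub_ne_zero.mpr (Ne.symm hm_ne)))
          linarith
        · push_neg at hall
          obtain ⟨f₀, hf₀⟩ := hall
          have : 0 < (u f₀ - (∑ f', u f')/N)^2 := by
            apply sq_pos_of_ne_zero
            exact sub_ne_zero.mpr hf₀
          have hle : (u f₀ - (∑ f', u f')/N)^2 ≤ ∑ f, (u f - (∑ f', u f')/N)^2 :=
            Finset.single_le_sum (f := fun f => (u f - (∑ f', u f')/N)^2)
              (fun f _ => sq_nonneg _) (mem_univ f₀)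
          linarith
      linarith
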